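/- Let X ⊆ ℕ be a finite set which is ω^{n+3}-large and exp-sparse, and let d ∈ ℕ with d ≤ min X. Then X admits an (ω^n, d)-grouping; that is, for every colouring P : [X]^2 → 2 there exists an (ω^n, d)-grouping for P. -/

import Mathlib

/- Ordinals `α < ω^ω` are represented in Cantor normal form as the list of their
exponents in nonincreasing order: `[n₀, n₁, …, n_{k-1}]` codes `ω^{n₀} + ⋯ + ω^{n_{k-1}}`,
and such a list is a valid Cantor normal form when it is sorted w.r.t. `≥`. -/

/-- The Ketonen–Solovay operation `α[m]`: `0[m] = 0`; `α[m] = β` if `α = β + 1`;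
`α[m] = β + ω^(n-1)·m` if `α = β + ω^n` with `n ≥ 1`. -/
def KSstep : List ℕ → ℕ → List ℕ
  | [], _ => []
  | [0], _ => []
  | [Nat.succ n], m => List.replicate m n
  | a :: b :: l, m => a :: KSstep (b :: l) m

/-- A finite set `X = {x₀ < ⋯ < x_{ℓ-1}} ⊆ ℕ` is `α`-large if `α[x₀][x₁]⋯[x_{ℓ-1}| = 0`. -/
def IsLarge (α : List ℕ) (X : Finset ℕ) : Prop :=
  (X.sort (· ≤ ·)).foldl KSstep α = []

/-- A finite set `X ⊆ ℕ` (with `min X ≥ 3`) is exp-sparse if for all `x, y ∈ X`,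
`x < y` implies `4^x < y`. -/
def ExpSparse (X : Finset ℕ) : Prop :=
  (∀ x ∈ X, 3 ≤ x) ∧ ∀ x ∈ X, ∀ y ∈ X, x < y → 4 ^ x < y

/-- A finite set `X ⊆ ℕ` is `α`-sparse if for all `x, y ∈ X` with `x < y`,
the interval `(x, y]` is `α`-large. -/
def SparseFor (α : List ℕ) (X : Finset ℕ) : Prop :=
  ∀ x ∈ X, ∀ y ∈ X, x < y → IsLarge α (Finset.Ioc x y)

/-- `Fs = ⟨F_i : i < ℓ⟩` is an `(α, β)`-grouping for the colouring `P` on `X`: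
the `F_i` are subsets of `X`, each `F_i` is (nonempty and) `α`-large, the groups are
arranged in increasing order, the set `{max F_i : i < ℓ}` is `β`-large, and the colour
of a pair of elements from two distinct groups depends only on the groups. -/
def IsGrouping (α β : List ℕ) (X : Finset ℕ) (P : ℕ → ℕ → Fin 2)
    (Fs : List (Finset ℕ)) : Prop :=
  (∀ F ∈ Fs, F ⊆ X ∧ F.Nonempty ∧ IsLarge α F) ∧
  (∀ i j, i < j → j < Fs.length →
    ∀ x ∈ Fs.getD i ∅, ∀ y ∈ Fs.getD j ∅, x < y) ∧
  IsLarge β (Fs.map fun F => F.sup id).toFinset ∧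
  (∀ i j, i < j → j < Fs.length →
    ∀ x ∈ Fs.getD i ∅, ∀ x' ∈ Fs.getD i ∅, ∀ y ∈ Fs.getD j ∅, ∀ y' ∈ Fs.getD j ∅,
      P x y = P x' y')

/-- `X` admits an `(α, β)`-grouping if every colouring `P : [X]² → 2` has an
`(α, β)`-grouping. -/
def AdmitsGrouping (α β : List ℕ) (X : Finset ℕ) : Prop :=
  ∀ P : ℕ → ℕ → Fin 2, ∃ Fs : List (Finset ℕ), IsGrouping α β X P Fs

namespace KSG

/-- step on reversed representation (head = least exponent) -/
def step : List ℕ → ℕ → List ℕ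
  | [], _ => []
  | 0 :: l, _ => l
  | (Nat.succ n) :: l, m => List.replicate m n ++ l

def F (α s : List ℕ) : List ℕ := s.foldl step α

def L (α s : List ℕ) : Prop := F α s = []

@[simp] theorem step_nil (m : ℕ) : step [] m = [] := rfl

@[simp] theorem step_cons_zero (l : List ℕ) (m : ℕ) : step (0 :: l) m = l := rfl

@[simp] theorem step_cons_succ (n : ℕ) (l : List ℕ) (m : ℕ) :
    step (Nat.succ n :: l) m = List.replicate m n ++ l := rfl

theorem step_zero (a : ℕ) (l : List ℕ) : step (a :: l) 0 = l := by
  cases a <;> simp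

theorem step_append {u : List ℕ} (h : u ≠ []) (v : List ℕ) (m : ℕ) :
    step (u ++ v) m = step u m ++ v := by
  match u with
  | [] => exact absurd rfl h
  | 0 :: t => simp
  | (Nat.succ n) :: t => simp [List.append_assoc]

@[simp] theorem F_nil_ord (s : List ℕ) : F [] s = [] := by
  induction s with
  | nil => rfl
  | cons x t ih => simpa [F] using ih

@[simp] theorem F_nil (α : List ℕ) : F α [] = α := rfl

theorem F_cons (α : List ℕ) (x : ℕ) (s : List ℕ) : F α (x :: s) = F (step α x) s := rfl

theorem F_append (α s t : List ℕ) : F α (s ++ t) = F (F α s) t := List.foldl_append ..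

theorem L_nil_ord (s : List ℕ) : L [] s := F_nil_ord s

theorem L_nil {α : List ℕ} (h : L α []) : α = [] := h

theorem L_ne_nil {α s : List ℕ} (hα : α ≠ []) (h : L α s) : s ≠ [] := by
  rintro rfl; exact hα h

theorem L_append_split {u v s : List ℕ} (h : L (u ++ v) s) :
    ∃ s₁ s₂, s = s₁ ++ s₂ ∧ L u s₁ ∧ L v s₂ := by
  induction s generalizing u with
  | nil =>
    have h2 : u ++ v = [] := h
    rcases List.append_eq_nil_iff.mp h2 with ⟨rfl, rfl⟩
    exact ⟨[], [], rfl, rfl, rfl⟩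
  | cons x t ih =>
    by_cases hu : u = []
    · subst hu
      exact ⟨[], x :: t, rfl, rfl, h⟩
    · have h2 : L (step u x ++ v) t := by
        have := F_cons (u ++ v) x t
        rw [step_append hu] at this
        simpa [L, this] using h
      obtain ⟨s₁, s₂, rfl, h3, h4⟩ := ih h2
      exact ⟨x :: s₁, s₂, rfl, h3, h4⟩

theorem L_prefix {u v s : List ℕ} (h : L (u ++ v) s) : L u s := by
  obtain ⟨s₁, s₂, rfl, h1, _⟩ := L_append_split h
  have h1' : F u s₁ = [] := h1
  show F u (s₁ ++ s₂) = []
  rw [F_append, h1', F_nil_ord]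

/-- reachability by small steps -/
def Reach (r : ℕ) : List ℕ → List ℕ → Prop :=
  Relation.ReflTransGen (fun a b => ∃ j ≤ r, b = step a j)

theorem reach_refl (r : ℕ) (a : List ℕ) : Reach r a a := Relation.ReflTransGen.refl

theorem reach_single {j r : ℕ} (h : j ≤ r) (a : List ℕ) : Reach r a (step a j) :=
  Relation.ReflTransGen.single ⟨j, h, rfl⟩

theorem reach_tail {r : ℕ} {a b : List ℕ} (h : Reach r a b) {j : ℕ} (hj : j ≤ r) :
    Reach r a (step b j) := h.tail ⟨j, hj, rfl⟩

theorem reach_mono {r r' : ℕ} (hr : r ≤ r') {a b : List ℕ} (h : Reach r a b) : Reach r' a b := by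
  refine Relation.ReflTransGen.mono ?_ _ _ h
  rintro x y ⟨j, hj, rfl⟩
  exact ⟨j, hj.trans hr, rfl⟩

theorem reach_nil {r : ℕ} {γ : List ℕ} (h : Reach r [] γ) : γ = [] := by
  induction h with
  | refl => rfl
  | tail _ hbc ih =>
    obtain ⟨j, _, rfl⟩ := hbc
    rw [ih]
    rfl

theorem reach_del (r : ℕ) (u w : List ℕ) : Reach r (u ++ w) w := by
  induction u with
  | nil => exact reach_refl r w
  | cons a t ih =>
    exact Relation.ReflTransGen.head ⟨0, Nat.zero_le r, (step_zero a (t ++ w)).symm⟩ ih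

theorem comm (v : List ℕ) (j x : ℕ) (h : j ≤ x) :
    Reach x (step v x) (step (step v j) x) := by
  match v with
  | [] => simpa using reach_refl x ([] : List ℕ)
  | 0 :: t => simpa using reach_single le_rfl t
  | (Nat.succ n) :: t =>
    cases j with
    | zero =>
      rw [step_zero]
      simpa using reach_tail (reach_del x (List.replicate x n) t) le_rfl
    | succ j' =>
      cases n with
      | zero =>
        have e1 : step (step (Nat.succ 0 :: t) (Nat.succ j')) x = List.replicate j' 0 ++ t := by
          simp [List.replicate_succ]
        rw [e1, step_cons_succ]
        have e2 : List.replicate x 0 ++ t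
            = List.replicate (x - j') 0 ++ (List.replicate j' 0 ++ t) := by
          rw [← List.append_assoc, ← List.replicate_add]
          congr 2
          omega
        rw [e2]
        exact reach_del ..
      | succ n' =>
        have e1 : step (step (Nat.succ (Nat.succ n') :: t) (Nat.succ j')) x
            = List.replicate x n' ++ (List.replicate j' (Nat.succ n') ++ t) := by
          simp [List.replicate_succ]
        rw [e1, step_cons_succ]
        have e2 : List.replicate x (Nat.succ n') ++ t
            = List.replicate (x - Nat.succ j') (Nat.succ n')
              ++ (List.replicate (Nat.succ j') (Nat.succ n') ++ t) := by
          rw [← List.append_assoc, ← List.replicate_add]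
          congr 2
          omega
        have e3 : step (List.replicate (Nat.succ j') (Nat.succ n') ++ t) x
            = List.replicate x n' ++ (List.replicate j' (Nat.succ n') ++ t) := by
          simp [List.replicate_succ]
        rw [e2, ← e3]
        exact reach_tail (reach_del ..) le_rfl

theorem main : ∀ (s : List ℕ), s.Pairwise (· ≤ ·) → ∀ r β γ, (∀ y ∈ s, r ≤ y) →
    Reach r β γ → L β s → L γ s := by
  intro s
  induction s with
  | nil =>
    intro _ r β γ _ hreach hL
    have hβ : β = [] := hL
    subst hβ
    have : γ = [] := reach_nil hreach
    simp [L, this]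
  | cons x t ih =>
    intro hsort r β γ hbound hreach hL
    have hxt : ∀ y ∈ t, x ≤ y := (List.pairwise_cons.mp hsort).1
    have hst : t.Pairwise (· ≤ ·) := (List.pairwise_cons.mp hsort).2
    induction hreach with
    | refl => exact hL
    | tail hab hbc ih2 =>
      obtain ⟨j, hj, rfl⟩ := hbc
      have hLb : L _ (x :: t) := ih2
      have h1 : L (step _ x) t := hLb
      have hjx : j ≤ x := hj.trans (hbound x (List.mem_cons_self))
      exact ih hst x (step _ x) _ hxt (comm _ j x hjx) h1

theorem mono : ∀ (t : List ℕ), t.Pairwise (· ≤ ·) → ∀ {s α : List ℕ}, s.Sublist t →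
    L α s → L α t := by
  intro t
  induction t with
  | nil =>
    intro _ s α hs hL
    rwa [List.sublist_nil.mp hs] at hL
  | cons x t ih =>
    intro hsort s α hsub hL
    have hxt : ∀ y ∈ t, x ≤ y := (List.pairwise_cons.mp hsort).1
    have hst : t.Pairwise (· ≤ ·) := (List.pairwise_cons.mp hsort).2
    cases hsub with
    | cons _ h =>
      have h1 : L α t := ih hst h hL
      exact main t hst x α (step α x) hxt (reach_single le_rfl α) h1
    | cons_cons _ h =>
      exact ih hst h hL

theorem concat : ∀ (s₁ u : List ℕ), L u s₁ → ∀ (v s₂ : List ℕ), L v s₂ →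
    (s₁ ++ s₂).Pairwise (· ≤ ·) → L (u ++ v) (s₁ ++ s₂) := by
  intro s₁
  induction s₁ with
  | nil =>
    intro u hu v s₂ hv hs
    have : u = [] := hu
    subst this
    simpa using hv
  | cons x t ih =>
    intro u hu v s₂ hv hs
    by_cases hu0 : u = []
    · subst hu0
      refine mono _ hs ?_ hv
      simpa using (List.sublist_append_right (x :: t) s₂)
    · have h1 : L (step u x) t := hu
      have h2 := ih (step u x) h1 v s₂ hv ((List.pairwise_cons.mp hs).2)
      have h3 : F (u ++ v) (x :: (t ++ s₂)) = F (step u x ++ v) (t ++ s₂) := by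
        rw [F_cons, step_append hu0]
      exact h3.trans h2

theorem F_replicate_zero : ∀ (s : List ℕ) (d : ℕ),
    F (List.replicate d 0) s = List.replicate (d - s.length) 0 := by
  intro s
  induction s with
  | nil => simp
  | cons x t ih =>
    intro d
    cases d with
    | zero => simp [F_cons, ih]
    | succ d' =>
      rw [List.replicate_succ, F_cons, step_cons_zero, ih]
      congr 1
      simp only [List.length_cons]
      omega

theorem L_replicate_zero_iff {s : List ℕ} {d : ℕ} :
    L (List.replicate d 0) s ↔ d ≤ s.length := by
  rw [L, F_replicate_zero, List.replicate_eq_nil_iff]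
  omega

theorem L_rep_mono {a m : ℕ} {s : List ℕ} (h : L (List.replicate a m) s) {b : ℕ} (hb : b ≤ a) :
    L (List.replicate b m) s := by
  have : List.replicate a m = List.replicate b m ++ List.replicate (a - b) m := by
    rw [← List.replicate_add]
    congr 1
    omega
  rw [this] at h
  exact L_prefix h

theorem foldl_reverse : ∀ (s α : List ℕ), (s.foldl KSstep α).reverse = F α.reverse s := by
  intro s
  induction s with
  | nil => intro α; rfl
  | cons x t ih =>
    intro α
    have hK : ∀ (l : List ℕ) (m : ℕ), (KSstep l m).reverse = step l.reverse m := by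
      intro l
      induction l with
      | nil => intro m; rfl
      | cons a u ihl =>
        intro m
        cases u with
        | nil =>
          cases a with
          | zero => rfl
          | succ n => simp [KSstep, step, List.reverse_replicate]
        | cons b u' =>
          have e : KSstep (a :: b :: u') m = a :: KSstep (b :: u') m := by
            simp only [KSstep]
          calc (KSstep (a :: b :: u') m).reverse
              = (KSstep (b :: u') m).reverse ++ [a] := by rw [e, List.reverse_cons]
            _ = step ((b :: u').reverse) m ++ [a] := by rw [ihl]
            _ = step ((b :: u').reverse ++ [a]) m := by
                rw [step_append (by simp : (b :: u').reverse ≠ [])]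
            _ = step ((a :: b :: u').reverse) m := by conv_rhs => rw [List.reverse_cons]
    show ((x :: t).foldl KSstep α).reverse = F α.reverse (x :: t)
    rw [List.foldl_cons, ih, F_cons, hK]

theorem isLarge_iff {α : List ℕ} {X : Finset ℕ} :
    IsLarge α X ↔ L α.reverse (X.sort (· ≤ ·)) := by
  unfold IsLarge L
  rw [← foldl_reverse]
  simp

end KSG

namespace KSG

/-- exp-sparseness for lists -/
def Sp (s : List ℕ) : Prop := s.Pairwise (fun x y => 4 ^ x < y)

theorem Sp.sorted_le {s : List ℕ} (h : Sp s) : s.Pairwise (· ≤ ·) := by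
  refine h.imp ?_
  intro a b hab
  have : a < 4 ^ a := Nat.lt_pow_self (by norm_num)
  omega

theorem Sp.sublist {s t : List ℕ} (hsub : s.Sublist t) (h : Sp t) : Sp s :=
  List.Pairwise.sublist hsub h

theorem le_getLast_of_sorted : ∀ (s : List ℕ), s.Pairwise (· ≤ ·) → (hne : s ≠ []) →
    ∀ x ∈ s, x ≤ s.getLast hne := by
  intro s
  induction s with
  | nil => intro _ h; exact absurd rfl h
  | cons a t ih =>
    intro hsort hne x hx
    cases t with
    | nil =>
      simp at hx
      simp [hx, List.getLast]
    | cons b t' =>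
      rw [List.getLast_cons (by simp)]
      rcases List.mem_cons.mp hx with rfl | hx'
      · exact le_trans ((List.pairwise_cons.mp hsort).1 _ (List.getLast_mem _))
          (le_refl _)
      · exact ih (List.pairwise_cons.mp hsort).2 (by simp) x hx'

theorem arith1 : ∀ M : ℕ, 2 ≤ M → 2 * M + 4 ≤ 4 ^ M := by
  intro M hM
  induction M with
  | zero => omega
  | succ k ih =>
    rcases Nat.lt_or_ge k 2 with h | h
    · interval_cases k
      · omega
      · norm_num
    · have h1 := ih (by omega)
      have h2 : 1 ≤ 4 ^ k := Nat.one_le_pow _ _ (by norm_num)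
      have h3 : 4 ^ (k + 1) = 4 * 4 ^ k := by ring
      omega

/-- heavy-side construction -/
theorem build (m r r' cT sT : ℕ) (u vv : List ℕ)
    (hsort : (u ++ vv).Pairwise (· ≤ ·))
    (hboundu : ∀ x ∈ u, x ≤ r')
    (hsT : r + 2 ≤ sT)
    (hHq : L (List.replicate (sT - 1) m) u)
    (hRootV : ∀ ρ ≤ r', L (List.replicate cT (m + 1)) (ρ :: vv)) :
    (∀ ρ ≤ r, L (List.replicate (cT + 1) (m + 1)) (ρ :: (u ++ vv)))
    ∧ L (List.replicate cT (m + 1)) (u ++ vv) := by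
  have h1 : L (List.replicate 1 m) u := L_rep_mono hHq (by omega)
  have h1' : L [m] u := by simpa using h1
  have hune : u ≠ [] := L_ne_nil (by simp) h1'
  constructor
  · intro ρ hρ
    have hstep : step (List.replicate (cT + 1) (m + 1)) ρ
        = List.replicate ρ m ++ List.replicate cT (m + 1) := by
      rw [List.replicate_succ]
      exact step_cons_succ ..
    show F _ (ρ :: (u ++ vv)) = []
    rw [F_cons, hstep]
    have h2 : L (List.replicate (ρ + 1) m) u := L_rep_mono hHq (by omega)
    have h3 : List.replicate (ρ + 1) m = List.replicate ρ m ++ [m] :=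
      List.replicate_succ' ..
    rw [h3] at h2
    obtain ⟨w₁, w₂, hu_eq, hw₁, hw₂⟩ := L_append_split h2
    have hw₂ne : w₂ ≠ [] := L_ne_nil (by simp) hw₂
    obtain ⟨sp, w₂t, rfl⟩ : ∃ a t, w₂ = a :: t := by
      cases w₂ with
      | nil => exact absurd rfl hw₂ne
      | cons a t => exact ⟨a, t, rfl⟩
    have hspmem : sp ∈ u := by
      rw [hu_eq]
      exact List.mem_append_right _ (List.mem_cons_self ..)
    have h4 : L (List.replicate cT (m + 1)) (sp :: vv) := hRootV sp (hboundu _ hspmem)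
    have hsubu : (w₁ ++ [sp]).Sublist u := by
      rw [hu_eq]
      refine List.Sublist.append (List.Sublist.refl w₁) ?_
      simpa using List.cons_sublist_cons.mpr (List.nil_sublist w₂t)
    have hsub : (w₁ ++ (sp :: vv)).Sublist (u ++ vv) := by
      have := List.Sublist.append hsubu (List.Sublist.refl vv)
      simpa using this
    have hsorted2 : (w₁ ++ (sp :: vv)).Pairwise (· ≤ ·) :=
      List.Pairwise.sublist hsub hsort
    have h5 := concat w₁ _ hw₁ _ (sp :: vv) h4 hsorted2
    exact mono _ hsort hsub h5
  · obtain ⟨a0, utail, rfl⟩ : ∃ a t, u = a :: t := by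
      cases u with
      | nil => exact absurd rfl hune
      | cons a t => exact ⟨a, t, rfl⟩
    have h4 : L (List.replicate cT (m + 1)) (a0 :: vv) :=
      hRootV a0 (hboundu _ (List.mem_cons_self ..))
    have hsub : (a0 :: vv).Sublist ((a0 :: utail) ++ vv) := by
      simpa using List.cons_sublist_cons.mpr (List.sublist_append_right utail vv)
    exact mono _ hsort hsub h4

/-- light-side construction -/
theorem lightmono (m cL r r' : ℕ) (u vv : List ℕ)
    (hsort : (u ++ vv).Pairwise (· ≤ ·))
    (hmin : ∀ x ∈ u ++ vv, r + 1 ≤ x)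
    (hrr' : r ≤ r')
    (hRootV : ∀ ρ ≤ r', L (List.replicate cL (m + 1)) (ρ :: vv))
    (hHonV : 1 ≤ cL → L (List.replicate (cL - 1) (m + 1)) vv) :
    (∀ ρ ≤ r, L (List.replicate cL (m + 1)) (ρ :: (u ++ vv)))
    ∧ (1 ≤ cL → L (List.replicate (cL - 1) (m + 1)) (u ++ vv)) := by
  constructor
  · intro ρ hρ
    have h1 : L (List.replicate cL (m + 1)) (ρ :: vv) := hRootV ρ (hρ.trans hrr')
    have hsorted : (ρ :: (u ++ vv)).Pairwise (· ≤ ·) := by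
      refine List.pairwise_cons.mpr ⟨?_, hsort⟩
      intro b hb
      have := hmin b hb
      omega
    have hsub : (ρ :: vv).Sublist (ρ :: (u ++ vv)) :=
      List.cons_sublist_cons.mpr (List.sublist_append_right u vv)
    exact mono _ hsorted hsub h1
  · intro hcL
    exact mono _ hsort (List.sublist_append_right u vv) (hHonV hcL)

end KSG

namespace KSG

theorem sorted_cons_of_bound {w : List ℕ} (hw : w.Pairwise (· ≤ ·)) {ρ : ℕ}
    (h : ∀ x ∈ w, ρ ≤ x) : (ρ :: w).Pairwise (· ≤ ·) := List.pairwise_cons.mpr ⟨h, hw⟩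

theorem DL2 : ∀ (m c : ℕ) (z : List ℕ) (r : ℕ) (sel : ℕ → Bool),
    Sp z → (∀ x ∈ z, 2 * r + 4 ≤ x) → L (List.replicate c m) z →
    ∃ a b : ℕ, c ≤ a + b
      ∧ (∀ ρ ≤ r, L (List.replicate a m) (ρ :: z.filter sel))
      ∧ (∀ ρ ≤ r, L (List.replicate b m) (ρ :: z.filter (fun x => !sel x)))
      ∧ (1 ≤ a → L (List.replicate (a - 1) m) (z.filter sel))
      ∧ (1 ≤ b → L (List.replicate (b - 1) m) (z.filter (fun x => !sel x))) := by
  intro m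
  induction m with
  | zero =>
    intro c z r sel _ _ hL
    have hlen : c ≤ z.length := L_replicate_zero_iff.mp hL
    have hsum : (z.filter sel).length + (z.filter (fun x => !sel x)).length = z.length := by
      have := (List.filter_append_perm sel z).length_eq
      simpa using this
    refine ⟨(z.filter sel).length, (z.filter (fun x => !sel x)).length, by omega,
      ?_, ?_, ?_, ?_⟩
    · intro ρ _
      exact L_replicate_zero_iff.mpr (by simp)
    · intro ρ _
      exact L_replicate_zero_iff.mpr (by simp)
    · intro _
      exact L_replicate_zero_iff.mpr (by omega)
    · intro _
      exact L_replicate_zero_iff.mpr (by omega)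
  | succ m ihm =>
    intro c
    induction c with
    | zero =>
      intro z r sel _ _ _
      exact ⟨0, 0, le_refl 0, fun ρ _ => L_nil_ord _, fun ρ _ => L_nil_ord _,
        by omega, by omega⟩
    | succ c ihc =>
      intro z r sel hsp hbd hL
      have hL' : L ([Nat.succ m] ++ List.replicate c (Nat.succ m)) z := by
        simpa [List.replicate_succ] using hL
      obtain ⟨p, Y, rfl, hp, hY⟩ := L_append_split hL'
      have hpne : p ≠ [] := L_ne_nil (by simp) hp
      obtain ⟨e, q, rfl⟩ : ∃ e q, p = e :: q := by
        cases p with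
        | nil => exact absurd rfl hpne
        | cons e q => exact ⟨e, q, rfl⟩
      have hq : L (List.replicate e m) q := by
        have h0 : F [Nat.succ m] (e :: q) = F (List.replicate e m) q := by
          rw [F_cons]
          congr 1
          simpa using step_cons_succ m [] e
        exact (h0.symm.trans hp)
      have hsorted : ((e :: q) ++ Y).Pairwise (· ≤ ·) := hsp.sorted_le
      have hspP : Sp (e :: q) := hsp.sublist (List.sublist_append_left ..)
      have hspQ : Sp q := hspP.sublist (List.sublist_cons_self ..)
      have hspY : Sp Y := hsp.sublist (List.sublist_append_right ..)
      set r' := (e :: q).getLast (by simp) with hr'def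
      have hr'mem : r' ∈ (e :: q) := List.getLast_mem _
      have hple : ∀ x ∈ (e :: q), x ≤ r' :=
        le_getLast_of_sorted _ hspP.sorted_le (by simp)
      have hcross : ∀ yy ∈ Y, 4 ^ r' < yy := by
        intro yy hyy
        exact (List.pairwise_append.mp hsp).2.2 _ hr'mem _ hyy
      have he : 2 * r + 4 ≤ e := hbd _ (by simp)
      have hr'big : 2 ≤ r' := le_trans (by omega : 2 ≤ e) (hple e (by simp))
      have hbdY : ∀ x ∈ Y, 2 * r' + 4 ≤ x := by
        intro x hx
        have h1 := hcross x hx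
        have h2 := arith1 r' hr'big
        omega
      have hbdq : ∀ x ∈ q, 2 * r + 4 ≤ x := fun x hx => hbd x (by simp [hx])
      obtain ⟨sA, sB, hsab, hRAq, hRBq, hHAq, hHBq⟩ := ihm e q r sel hspQ hbdq hq
      obtain ⟨cA, cB, hcab, hRAY, hRBY, hHAY, hHBY⟩ := ihc Y r' sel hspY hbdY hY
      have hrr' : r ≤ r' := le_trans (by omega : r ≤ e) (hple e (by simp))
      -- sortedness of filtered pieces
      have hsorted_zselA : (((e :: q) ++ Y).filter sel).Pairwise (· ≤ ·) :=
        List.Pairwise.sublist (List.filter_sublist) hsorted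
      have hsorted_zselB : (((e :: q) ++ Y).filter (fun x => !sel x)).Pairwise (· ≤ ·) :=
        List.Pairwise.sublist (List.filter_sublist) hsorted
      have hfilter_split : ∀ f : ℕ → Bool,
          ((e :: q) ++ Y).filter f = ((e :: q).filter f) ++ (Y.filter f) :=
        fun f => List.filter_append ..
      have hsubqf : ∀ f : ℕ → Bool,
          ((q.filter f) ++ (Y.filter f)).Sublist (((e :: q) ++ Y).filter f) := by
        intro f
        rw [hfilter_split f]
        exact List.Sublist.append
          (List.Sublist.filter f (List.sublist_cons_self ..)) (List.Sublist.refl _)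
      have hboundmem : ∀ f : ℕ → Bool, ∀ x ∈ q.filter f, x ≤ r' := by
        intro f x hx
        exact hple x (List.mem_cons_of_mem _ (List.mem_filter.mp hx).1)
      have hbd_all : ∀ f : ℕ → Bool, ∀ x ∈ ((e :: q) ++ Y).filter f, r + 1 ≤ x := by
        intro f x hx
        have := hbd x (List.mem_of_mem_filter hx)
        omega
      rcases le_or_gt (r + 2) sA with hheavy | hlightA
      · -- A is heavy
        have hsortA : ((q.filter sel) ++ (Y.filter sel)).Pairwise (· ≤ ·) :=
          List.Pairwise.sublist (hsubqf sel) hsorted_zselA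
        obtain ⟨hbRoot, hbHon⟩ := build m r r' cA sA (q.filter sel) (Y.filter sel)
          hsortA (hboundmem sel) hheavy (hHAq (by omega)) hRAY
        obtain ⟨hlRoot, hlHon⟩ := lightmono m cB r r'
          ((e :: q).filter (fun x => !sel x)) (Y.filter (fun x => !sel x))
          (by rw [← hfilter_split]; exact hsorted_zselB)
          (by rw [← hfilter_split]; exact hbd_all _) hrr' hRBY hHBY
        refine ⟨cA + 1, cB, by omega, ?_, ?_, ?_, ?_⟩
        · intro ρ hρ
          have h1 := hbRoot ρ hρ
          have hsorted2 : (ρ :: ((e :: q) ++ Y).filter sel).Pairwise (· ≤ ·) :=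
            sorted_cons_of_bound hsorted_zselA
              (fun x hx => by have := hbd_all sel x hx; omega)
          exact mono _ hsorted2 (List.cons_sublist_cons.mpr (hsubqf sel)) h1
        · intro ρ hρ
          have h1 := hlRoot ρ hρ
          rw [← hfilter_split] at h1
          exact h1
        · intro _
          have h1 := hbHon
          simpa using mono _ hsorted_zselA (hsubqf sel) h1
        · intro hcB
          have h1 := hlHon hcB
          rw [← hfilter_split] at h1
          exact h1
      · -- B is heavy
        have hheavyB : r + 2 ≤ sB := by omega
        have hsortB : ((q.filter (fun x => !sel x)) ++ (Y.filter (fun x => !sel x))).Pairwise (· ≤ ·) :=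
          List.Pairwise.sublist (hsubqf _) hsorted_zselB
        obtain ⟨hbRoot, hbHon⟩ := build m r r' cB sB
          (q.filter (fun x => !sel x)) (Y.filter (fun x => !sel x))
          hsortB (hboundmem _) hheavyB (hHBq (by omega)) hRBY
        obtain ⟨hlRoot, hlHon⟩ := lightmono m cA r r'
          ((e :: q).filter sel) (Y.filter sel)
          (by rw [← hfilter_split]; exact hsorted_zselA)
          (by rw [← hfilter_split]; exact hbd_all _) hrr' hRAY hHAY
        refine ⟨cA, cB + 1, by omega, ?_, ?_, ?_, ?_⟩
        · intro ρ hρ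
          have h1 := hlRoot ρ hρ
          rw [← hfilter_split] at h1
          exact h1
        · intro ρ hρ
          have h1 := hbRoot ρ hρ
          have hsorted2 : (ρ :: ((e :: q) ++ Y).filter (fun x => !sel x)).Pairwise (· ≤ ·) :=
            sorted_cons_of_bound hsorted_zselB
              (fun x hx => by have := hbd_all _ x hx; omega)
          exact mono _ hsorted2 (List.cons_sublist_cons.mpr (hsubqf _)) h1
        · intro hcA
          have h1 := hlHon hcA
          rw [← hfilter_split] at h1
          exact h1
        · intro _
          simpa using mono _ hsorted_zselB (hsubqf _) hbHon

end KSG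

namespace KSG

theorem comp2 {m c : ℕ} {z : List ℕ} (sel : ℕ → Bool)
    (hsp : Sp z) (hb : ∀ x ∈ z, 4 ≤ x) (hL : L (List.replicate c m) z)
    (hnot : ¬ L [m] (z.filter sel)) :
    L (List.replicate (c - 2) m) (z.filter (fun x => !sel x)) := by
  obtain ⟨a, b, hab, _, _, hHA, hHB⟩ := DL2 m c z 0 sel hsp (by simpa using hb) hL
  have ha : a ≤ 1 := by
    by_contra h
    have h1 := hHA (by omega)
    have h2 : L (List.replicate 1 m) (z.filter sel) := L_rep_mono h1 (by omega)
    exact hnot (by simpa using h2)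
  rcases Nat.eq_zero_or_pos b with hb0 | hb1
  · have : c ≤ 1 := by omega
    have h2 : c - 2 = 0 := by omega
    rw [h2]
    exact L_nil_ord _
  · have h1 := hHB hb1
    exact L_rep_mono h1 (by omega)

theorem pig : ∀ (k c m : ℕ) (z : List ℕ) (g : ℕ → ℕ),
    Sp z → (∀ x ∈ z, 4 ≤ x) → (∀ x ∈ z, g x < k) → L (List.replicate c m) z →
    2 * k ≤ c + 1 → 1 ≤ k →
    ∃ i < k, L [m] (z.filter (fun x => g x == i)) := by
  intro k
  induction k with
  | zero => intro _ _ _ _ _ _ _ _ _ h; omega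
  | succ k ihk =>
    intro c m z g hsp hb hg hL hc _
    rcases Nat.eq_zero_or_pos k with rfl | hk1
    · refine ⟨0, by omega, ?_⟩
      have hfe : z.filter (fun x => g x == 0) = z := by
        refine List.filter_eq_self.mpr ?_
        intro x hx
        have := hg x hx
        simpa using by omega
      rw [hfe]
      have h1 : L (List.replicate 1 m) z := L_rep_mono hL (by omega)
      simpa using h1
    · by_cases hlast : L [m] (z.filter (fun x => g x == k))
      · exact ⟨k, by omega, hlast⟩
      · have h1 := comp2 (fun x => g x == k) hsp hb hL hlast
        set z' := z.filter (fun x => !(g x == k)) with hz'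
        have hsp' : Sp z' := hsp.sublist (List.filter_sublist)
        have hb' : ∀ x ∈ z', 4 ≤ x := fun x hx => hb x (List.mem_of_mem_filter hx)
        have hg' : ∀ x ∈ z', g x < k := by
          intro x hx
          have h2 := (List.mem_filter.mp hx).2
          have h3 := hg x (List.mem_of_mem_filter hx)
          simp at h2
          omega
        obtain ⟨i, hik, hli⟩ := ihk (c - 2) m z' g hsp' hb' hg' h1 (by omega) hk1
        refine ⟨i, by omega, ?_⟩
        have hfe : z'.filter (fun x => g x == i) = z.filter (fun x => g x == i) := by
          rw [hz', List.filter_filter]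
          refine List.filter_congr ?_
          intro x hx
          by_cases hgi : g x = i
          · simp [hgi]
            omega
          · simp [hgi]
        rwa [hfe] at hli

end KSG

namespace KSG

theorem Sp.sorted_lt {s : List ℕ} (h : Sp s) : s.Pairwise (· < ·) := by
  refine h.imp ?_
  intro a b hab
  have : a < 4 ^ a := Nat.lt_pow_self (by norm_num)
  omega

theorem headD_mem {l : List ℕ} (h : l ≠ []) (d : ℕ) : l.headD d ∈ l := by
  cases l with
  | nil => exact absurd rfl h
  | cons a t => exact List.mem_cons_self ..

theorem ofDigits_lt_two_pow : ∀ (l : List ℕ), (∀ x ∈ l, x < 2) →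
    Nat.ofDigits 2 l < 2 ^ l.length := by
  intro l
  induction l with
  | nil => intro _; simp [Nat.ofDigits]
  | cons a t ih =>
    intro h
    have h1 : a < 2 := h a (List.mem_cons_self ..)
    have h2 := ih (fun x hx => h x (List.mem_cons_of_mem _ hx))
    rw [Nat.ofDigits_cons]
    have : (2:ℕ) ^ (a :: t).length = 2 * 2 ^ t.length := by
      rw [List.length_cons]
      ring
    omega

theorem ofDigits_map_eq (f g : ℕ → Fin 2) : ∀ (l : List ℕ),
    Nat.ofDigits 2 (l.map (fun x => (f x).val)) = Nat.ofDigits 2 (l.map (fun x => (g x).val)) →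
    ∀ x ∈ l, f x = g x := by
  intro l
  induction l with
  | nil => intro _ x hx; simp at hx
  | cons a t ih =>
    intro h x hx
    rw [List.map_cons, List.map_cons, Nat.ofDigits_cons, Nat.ofDigits_cons] at h
    have h1 : (f a).val < 2 := (f a).is_lt
    have h2 : (g a).val < 2 := (g a).is_lt
    have h3 : (f a).val = (g a).val ∧
        Nat.ofDigits 2 (t.map (fun x => (f x).val)) = Nat.ofDigits 2 (t.map (fun x => (g x).val)) := by
      constructor
      · omega
      · omega
    rcases List.mem_cons.mp hx with rfl | hx'
    · exact Fin.ext h3.1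
    · exact ih h3.2 x hx'

end KSG

namespace KSG

theorem arith2 : ∀ M : ℕ, 2 ≤ M → 2 ^ (M + 2) ≤ 4 ^ M := by
  intro M hM
  have h1 : (4:ℕ) ^ M = 2 ^ (2 * M) := by
    rw [show (4:ℕ) = 2 ^ 2 by norm_num, ← pow_mul]
  rw [h1]
  exact Nat.pow_le_pow_right (by norm_num) (by omega)

theorem length_le_of_sorted_lt {l : List ℕ} (h : l.Pairwise (· < ·)) {M : ℕ}
    (hM : ∀ x ∈ l, x ≤ M) : l.length ≤ M + 1 := by
  have hnd : l.Nodup := h.nodup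
  have hsub : l.toFinset ⊆ Finset.range (M + 1) := by
    intro x hx
    rw [Finset.mem_range]
    have := hM x (List.mem_toFinset.mp hx)
    omega
  have := Finset.card_le_card hsub
  rw [List.toFinset_card_of_nodup hnd, Finset.card_range] at this
  exact this

theorem blocks : ∀ (d m : ℕ) (s : List ℕ), L (List.replicate d m) s →
    ∃ Bs : List (List ℕ), ∃ rest, Bs.length = d ∧ s = Bs.flatten ++ rest ∧
      ∀ B ∈ Bs, L [m] B := by
  intro d
  induction d with
  | zero =>
    intro m s _
    exact ⟨[], s, rfl, by simp, by simp⟩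
  | succ d ih =>
    intro m s hL
    have hL' : L ([m] ++ List.replicate d m) s := by
      simpa [List.replicate_succ] using hL
    obtain ⟨B, s', rfl, hB, hs'⟩ := L_append_split hL'
    obtain ⟨Bs, rest, hlen, hjoin, hall⟩ := ih m s' hs'
    refine ⟨B :: Bs, rest, by simp [hlen], by simp [hjoin], ?_⟩
    intro C hC
    rcases List.mem_cons.mp hC with rfl | h
    · exact hB
    · exact hall C h

theorem flatten_sublist_of_forall₂ : ∀ {Fs Gs : List (List ℕ)},
    List.Forall₂ (fun F G => F.Sublist G) Fs Gs → Fs.flatten.Sublist Gs.flatten := by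
  intro Fs Gs h
  induction h with
  | nil => simp
  | cons h1 _ ih => exact List.Sublist.append h1 ih

theorem flatten_sorted_cross : ∀ (Ls : List (List ℕ)), Ls.flatten.Pairwise (· < ·) →
    Ls.Pairwise (fun A B => ∀ x ∈ A, ∀ y ∈ B, x < y) := by
  intro Ls
  induction Ls with
  | nil => intro _; exact List.Pairwise.nil
  | cons A Ls' ih =>
    intro h
    have h1 : (A ++ Ls'.flatten).Pairwise (· < ·) := by simpa using h
    have h2 := (List.pairwise_append.mp h1).2.2
    refine List.pairwise_cons.mpr ⟨?_, ih (List.pairwise_append.mp h1).2.1⟩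
    intro B hB x hx y hy
    exact h2 x hx y (List.mem_flatten.mpr ⟨B, hB, hy⟩)

theorem toFinset_sort_eq {l : List ℕ} (hl : l.Pairwise (· < ·)) :
    l.toFinset.sort (· ≤ ·) = l := by
  have hnd : l.Nodup := hl.nodup
  refine List.Perm.eq_of_pairwise' (Finset.pairwise_sort _ _) (hl.imp le_of_lt) ?_
  refine (List.perm_ext_iff_of_nodup (Finset.sort_nodup _ _) hnd).mpr ?_
  intro a
  rw [Finset.mem_sort, List.mem_toFinset]

theorem getD_map_toFinset (Ls : List (List ℕ)) (i : ℕ) :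
    (Ls.map List.toFinset).getD i ∅ = (Ls.getD i []).toFinset := by
  rcases Nat.lt_or_ge i Ls.length with h | h
  · rw [List.getD_eq_getElem _ _ (by simpa using h), List.getD_eq_getElem _ _ h]
    simp
  · rw [List.getD_eq_default _ _ (by simpa using h), List.getD_eq_default _ _ h]
    simp

theorem forall₂_mem_left {R : List ℕ → List ℕ → Prop} : ∀ {Fs Gs : List (List ℕ)},
    List.Forall₂ R Fs Gs → ∀ F ∈ Fs, ∃ G ∈ Gs, R F G := by
  intro Fs Gs h
  induction h with
  | nil => intro F hF; simp at hF
  | cons h1 _ ih =>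
    intro F hF
    rcases List.mem_cons.mp hF with rfl | hF'
    · exact ⟨_, List.mem_cons_self .., h1⟩
    · obtain ⟨G, hG, hR⟩ := ih F hF'
      exact ⟨G, List.mem_cons_of_mem _ hG, hR⟩

end KSG

namespace KSG

theorem selGroups (n : ℕ) (P : ℕ → ℕ → Fin 2) : ∀ (Bs : List (List ℕ)) (E : List ℕ),
    Sp (E ++ Bs.flatten) → (∀ x ∈ E ++ Bs.flatten, 4 ≤ x) →
    (∀ B ∈ Bs, L [n + 2] B) →
    ∃ Gs : List (List ℕ), Gs.length = Bs.length ∧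
      (∀ G ∈ Gs, L [n + 1] G ∧ G ≠ []) ∧
      Gs.flatten.Sublist Bs.flatten ∧
      (∀ x ∈ E, ∀ G ∈ Gs, ∀ y ∈ G, ∀ y' ∈ G, P x y = P x y') ∧
      Gs.Pairwise (fun A B => ∀ x ∈ A, ∀ y ∈ B, ∀ y' ∈ B, P x y = P x y') := by
  intro Bs
  induction Bs with
  | nil =>
    intro E _ _ _
    exact ⟨[], rfl, by simp, by simp, by simp, List.Pairwise.nil⟩
  | cons B Bs' ih =>
    intro E hsp hb4 hBl
    have hB : L [n + 2] B := hBl B (List.mem_cons_self ..)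
    have hBne : B ≠ [] := L_ne_nil (by simp) hB
    obtain ⟨e, body, rfl⟩ : ∃ e t, B = e :: t := by
      cases B with
      | nil => exact absurd rfl hBne
      | cons e t => exact ⟨e, t, rfl⟩
    have hbody : L (List.replicate e (n + 1)) body := by
      have h0 : F [n + 2] (e :: body) = F (List.replicate e (n + 1)) body := by
        rw [F_cons]
        congr 1
        simpa using step_cons_succ (n + 1) [] e
      exact h0.symm.trans hB
    have hflat : ((e :: body) :: Bs').flatten = (e :: body) ++ Bs'.flatten := by simp
    rw [hflat] at hsp hb4
    have hspE : Sp E := hsp.sublist (List.sublist_append_left ..)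
    have hcross : ∀ x ∈ E, ∀ y ∈ ((e :: body) ++ Bs'.flatten), 4 ^ x < y := by
      intro x hx y hy
      exact (List.pairwise_append.mp hsp).2.2 x hx y hy
    have he4 : 4 ≤ e := hb4 e (by simp)
    have hemem : e ∈ (e :: body) ++ Bs'.flatten := by simp
    -- the bound on the number of colour classes
    have hk : 2 * 2 ^ E.length ≤ e + 1 := by
      cases E with
      | nil => simpa using by omega
      | cons a E' =>
        have hne : (a :: E') ≠ [] := by simp
        set M := (a :: E').getLast hne with hMdef
        have hMmem : M ∈ a :: E' := List.getLast_mem _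
        have hM4 : 4 ≤ M := hb4 M (List.mem_append_left _ hMmem)
        have hMe : 4 ^ M < e := hcross M hMmem e hemem
        have hlenE : (a :: E').length ≤ M + 1 :=
          length_le_of_sorted_lt hspE.sorted_lt
            (le_getLast_of_sorted _ hspE.sorted_le hne)
        have h1 : (2:ℕ) * 2 ^ (a :: E').length ≤ 2 ^ (M + 2) := by
          have : (2:ℕ) ^ (a :: E').length ≤ 2 ^ (M + 1) :=
            Nat.pow_le_pow_right (by norm_num) hlenE
          have h2 : (2:ℕ) ^ (M + 2) = 2 * 2 ^ (M + 1) := by ring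
          omega
        have h3 := arith2 M (by omega)
        omega
    set g : ℕ → ℕ := fun y => Nat.ofDigits 2 (E.map (fun x => (P x y).val)) with hgdef
    have hglt : ∀ y, g y < 2 ^ E.length := by
      intro y
      have h1 := ofDigits_lt_two_pow (E.map (fun x => (P x y).val)) (by
        intro xx hxx
        obtain ⟨x, _, rfl⟩ := List.mem_map.mp hxx
        exact (P x y).is_lt)
      simpa using h1
    have hbodysub : body.Sublist (E ++ ((e :: body) ++ Bs'.flatten)) := by
      refine List.Sublist.trans ?_ (List.sublist_append_right E _)
      refine List.Sublist.trans ?_ (List.sublist_append_left ..)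
      exact List.sublist_cons_self ..
    have hspbody : Sp body := Sp.sublist hbodysub hsp
    have hb4body : ∀ x ∈ body, 4 ≤ x := by
      intro x hx
      exact hb4 x (hbodysub.subset hx)
    obtain ⟨i, hik, hGlarge⟩ := pig (2 ^ E.length) e (n + 1) body g hspbody hb4body
      (fun x _ => hglt x) hbody (by omega) (Nat.one_le_two_pow)
    set G := body.filter (fun y => g y == i) with hGdef
    have hGne : G ≠ [] := L_ne_nil (by simp) hGlarge
    have hGsubB : G.Sublist (e :: body) :=
      (List.filter_sublist).trans (List.sublist_cons_self ..)
    have hGconst : ∀ x ∈ E, ∀ y ∈ G, ∀ y' ∈ G, P x y = P x y' := by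
      intro x hx y hy y' hy'
      have h1 : g y = i := by simpa using (List.mem_filter.mp hy).2
      have h2 : g y' = i := by simpa using (List.mem_filter.mp hy').2
      refine ofDigits_map_eq (fun x => P x y) (fun x => P x y') E ?_ x hx
      rw [hgdef] at h1 h2
      simp only at h1 h2
      rw [h1, h2]
    -- recurse
    have hsp' : Sp ((E ++ G) ++ Bs'.flatten) := by
      refine Sp.sublist ?_ hsp
      rw [List.append_assoc]
      exact List.Sublist.append (List.Sublist.refl E)
        (List.Sublist.append hGsubB (List.Sublist.refl _))
    have hb4' : ∀ x ∈ (E ++ G) ++ Bs'.flatten, 4 ≤ x := by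
      intro x hx
      refine hb4 x ?_
      have hsub : ((E ++ G) ++ Bs'.flatten).Sublist (E ++ ((e :: body) ++ Bs'.flatten)) := by
        rw [List.append_assoc]
        exact List.Sublist.append (List.Sublist.refl E)
          (List.Sublist.append hGsubB (List.Sublist.refl _))
      exact hsub.subset hx
    obtain ⟨Gs', hlen', hprops', hsubfl', hEcl', hpw'⟩ :=
      ih (E ++ G) hsp' hb4' (fun B hB => hBl B (List.mem_cons_of_mem _ hB))
    refine ⟨G :: Gs', by simp [hlen'], ?_, ?_, ?_, ?_⟩
    · intro G' hG'
      rcases List.mem_cons.mp hG' with rfl | h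
      · exact ⟨hGlarge, hGne⟩
      · exact hprops' G' h
    · rw [hflat]
      simpa using List.Sublist.append hGsubB hsubfl'
    · intro x hx G' hG' y hy y' hy'
      rcases List.mem_cons.mp hG' with rfl | h
      · exact hGconst x hx y hy y' hy'
      · exact hEcl' x (List.mem_append_left _ hx) G' h y hy y' hy'
    · refine List.pairwise_cons.mpr ⟨?_, hpw'⟩
      intro G' hG' x hx y hy y' hy'
      exact hEcl' x (List.mem_append_right _ hx) G' hG' y hy y' hy'

end KSG

namespace KSG

theorem refine (n : ℕ) (P : ℕ → ℕ → Fin 2) (hds : List ℕ) (G : List ℕ)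
    (hL : L [n + 1] G) (hSp : Sp G) (h4 : ∀ x ∈ G, 4 ≤ x)
    (hk : 2 * 2 ^ hds.length ≤ G.headD 0 + 1) :
    ∃ Fl, Fl.Sublist G ∧ L [n] Fl ∧ Fl ≠ [] ∧
      ∀ x ∈ Fl, ∀ x' ∈ Fl, ∀ h ∈ hds, P x h = P x' h := by
  have hGne : G ≠ [] := L_ne_nil (by simp) hL
  obtain ⟨f, gb, rfl⟩ : ∃ f t, G = f :: t := by
    cases G with
    | nil => exact absurd rfl hGne
    | cons f t => exact ⟨f, t, rfl⟩
  have hgb : L (List.replicate f n) gb := by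
    have h0 : F [n + 1] (f :: gb) = F (List.replicate f n) gb := by
      rw [F_cons]
      congr 1
      simpa using step_cons_succ n [] f
    exact h0.symm.trans hL
  set τ : ℕ → ℕ := fun x => Nat.ofDigits 2 (hds.map (fun h => (P x h).val)) with hτdef
  have hτlt : ∀ x, τ x < 2 ^ hds.length := by
    intro x
    have h1 := ofDigits_lt_two_pow (hds.map (fun h => (P x h).val)) (by
      intro xx hxx
      obtain ⟨h, _, rfl⟩ := List.mem_map.mp hxx
      exact (P x h).is_lt)
    simpa using h1
  have hkf : 2 * 2 ^ hds.length ≤ f + 1 := by simpa using hk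
  obtain ⟨i, hik, hFlarge⟩ := pig (2 ^ hds.length) f n gb τ
    (hSp.sublist (List.sublist_cons_self ..))
    (fun x hx => h4 x (List.mem_cons_of_mem _ hx))
    (fun x _ => hτlt x) hgb (by omega) Nat.one_le_two_pow
  refine ⟨gb.filter (fun y => τ y == i), (List.filter_sublist).trans
    (List.sublist_cons_self ..), hFlarge, L_ne_nil (by simp) hFlarge, ?_⟩
  intro x hx x' hx' h hh
  have h1 : τ x = i := by simpa using (List.mem_filter.mp hx).2
  have h2 : τ x' = i := by simpa using (List.mem_filter.mp hx').2
  refine ofDigits_map_eq (fun h => P x h) (fun h => P x' h) hds ?_ h hh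
  rw [hτdef] at h1 h2
  simp only at h1 h2
  rw [h1, h2]

theorem refineAll (n : ℕ) (P : ℕ → ℕ → Fin 2) (K : ℕ) : ∀ (Gs : List (List ℕ)),
    Gs.length ≤ K + 1 →
    (∀ G ∈ Gs, L [n + 1] G ∧ Sp G ∧ (∀ y ∈ G, 4 ≤ y) ∧ 2 * 2 ^ K ≤ G.headD 0 + 1) →
    Gs.Pairwise (fun A B => ∀ x ∈ A, ∀ y ∈ B, ∀ y' ∈ B, P x y = P x y') →
    ∃ Fs : List (List ℕ), List.Forall₂ (fun Fl G => Fl.Sublist G) Fs Gs ∧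
      (∀ Fl ∈ Fs, L [n] Fl ∧ Fl ≠ []) ∧
      Fs.Pairwise (fun A B => ∀ x ∈ A, ∀ x' ∈ A, ∀ y ∈ B, ∀ y' ∈ B, P x y = P x' y') := by
  intro Gs
  induction Gs with
  | nil =>
    intro _ _ _
    exact ⟨[], List.Forall₂.nil, by simp, List.Pairwise.nil⟩
  | cons G Gs' ih =>
    intro hlen hprops hpw
    obtain ⟨hLG, hSpG, h4G, hkG⟩ := hprops G (List.mem_cons_self ..)
    set hds := Gs'.map (fun l => l.headD 0) with hhds
    have hk' : 2 * 2 ^ hds.length ≤ G.headD 0 + 1 := by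
      have h1 : hds.length = Gs'.length := by simp [hhds]
      have h2 : (2:ℕ) ^ hds.length ≤ 2 ^ K := by
        refine Nat.pow_le_pow_right (by norm_num) ?_
        rw [h1]
        have := hlen
        simp only [List.length_cons] at this
        omega
      omega
    obtain ⟨Fl, hFsub, hFL, hFne, hτ⟩ := refine n P hds G hLG hSpG h4G hk'
    obtain ⟨Fs', hfa', hprops', hpw'⟩ := ih
      (by simp only [List.length_cons] at hlen; omega)
      (fun G' hG' => hprops G' (List.mem_cons_of_mem _ hG'))
      (List.pairwise_cons.mp hpw).2
    refine ⟨Fl :: Fs', List.Forall₂.cons hFsub hfa', ?_, ?_⟩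
    · intro F' hF'
      rcases List.mem_cons.mp hF' with rfl | h
      · exact ⟨hFL, hFne⟩
      · exact hprops' F' h
    · refine List.pairwise_cons.mpr ⟨?_, hpw'⟩
      intro F' hF' x hx x' hx' y hy y' hy'
      obtain ⟨G', hG'mem, hFG'⟩ := forall₂_mem_left hfa' F' hF'
      have hG'ne : G' ≠ [] :=
        L_ne_nil (by simp) (hprops G' (List.mem_cons_of_mem _ hG'mem)).1
      have hhd : G'.headD 0 ∈ G' := headD_mem hG'ne 0
      have hconst : ∀ xx ∈ G, ∀ yy ∈ G', ∀ yy' ∈ G', P xx yy = P xx yy' :=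
        (List.pairwise_cons.mp hpw).1 G' hG'mem
      have hdmem : G'.headD 0 ∈ hds := by
        rw [hhds]
        exact List.mem_map_of_mem hG'mem
      calc P x y = P x (G'.headD 0) :=
            hconst x (hFsub.subset hx) y (hFG'.subset hy) _ hhd
        _ = P x' (G'.headD 0) := hτ x hx x' hx' _ hdmem
        _ = P x' y' := hconst x' (hFsub.subset hx') _ hhd y' (hFG'.subset hy')

end KSG

/-- Let `X ⊆ ℕ` be a finite set which is `ω^{n+3}`-large and exp-sparse, and let
`d ∈ ℕ` with `d ≤ min X`. Then `X` admits an `(ω^n, d)`-grouping: every colouring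
`P : [X]² → 2` has an `(ω^n, d)`-grouping. -/
theorem admitsGrouping_const (n : ℕ) (X : Finset ℕ)
    (hX : IsLarge [n + 3] X) (hs : ExpSparse X)
    (d : ℕ) (hd : ∀ x ∈ X, d ≤ x) :
    AdmitsGrouping [n] (List.replicate d 0) X := by
  intro P
  rcases Nat.eq_zero_or_pos d with rfl | hd1
  · refine ⟨[], ?_, ?_, ?_, ?_⟩
    · intro F hF; simp at hF
    · intro i j _ hj; simp at hj
    · simp [IsLarge]
    · intro i j _ hj; simp at hj
  obtain ⟨x₀, xt, hxseq⟩ : ∃ a t, X.sort (· ≤ ·) = a :: t := by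
    have h1 : KSG.L [n + 3] (X.sort (· ≤ ·)) := by
      have := KSG.isLarge_iff.mp hX
      simpa using this
    have h2 := KSG.L_ne_nil (by simp) h1
    cases hxx : X.sort (· ≤ ·) with
    | nil => exact absurd hxx h2
    | cons a t => exact ⟨a, t, rfl⟩
  have hLxs : KSG.L [n + 3] (x₀ :: xt) := by
    have := KSG.isLarge_iff.mp hX
    rw [hxseq] at this
    simpa using this
  have hSpxs : KSG.Sp (x₀ :: xt) := by
    rw [← hxseq]
    refine List.Pairwise.imp_of_mem ?_ (Finset.sortedLT_sort X).pairwise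
    intro a b ha hb hab
    exact hs.2 a ((Finset.mem_sort _).mp ha) b ((Finset.mem_sort _).mp hb) hab
  have hmemX : ∀ x ∈ x₀ :: xt, x ∈ X := by
    intro x hx
    rw [← hxseq] at hx
    exact (Finset.mem_sort _).mp hx
  have h3 : ∀ x ∈ x₀ :: xt, 3 ≤ x := fun x hx => hs.1 x (hmemX x hx)
  have hx03 : 3 ≤ x₀ := h3 _ (List.mem_cons_self ..)
  have hx0d : d ≤ x₀ := hd x₀ (hmemX _ (List.mem_cons_self ..))
  have hxt : KSG.L (List.replicate x₀ (n + 2)) xt := by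
    have h0 : KSG.F [n + 3] (x₀ :: xt) = KSG.F (List.replicate x₀ (n + 2)) xt := by
      rw [KSG.F_cons]
      congr 1
      simpa using KSG.step_cons_succ (n + 2) [] x₀
    exact h0.symm.trans hLxs
  have hxtd := KSG.L_rep_mono hxt hx0d
  obtain ⟨Bs, rest, hBlen, hxteq, hBall⟩ := KSG.blocks d (n + 2) xt hxtd
  have hSpxt : KSG.Sp xt := KSG.Sp.sublist (List.sublist_cons_self ..) hSpxs
  have hcross0 : ∀ y ∈ xt, 4 ^ x₀ < y := (List.pairwise_cons.mp hSpxs).1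
  have h4xt : ∀ y ∈ xt, 4 ≤ y := by
    intro y hy
    have h1 := hcross0 y hy
    have h2 : 4 ^ 3 ≤ 4 ^ x₀ := Nat.pow_le_pow_right (by norm_num) hx03
    norm_num at h2
    omega
  have hBsubxt : Bs.flatten.Sublist xt := by
    rw [hxteq]
    exact List.sublist_append_left ..
  obtain ⟨Gs, hGlen, hGprops, hGsub, _, hGpw⟩ := KSG.selGroups n P Bs []
    (by simpa using KSG.Sp.sublist hBsubxt hSpxt)
    (by
      intro x hx
      simp only [List.nil_append] at hx
      exact h4xt x (hBsubxt.subset hx))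
    hBall
  have hGsubxt : Gs.flatten.Sublist xt := hGsub.trans hBsubxt
  have hGmem : ∀ G ∈ Gs, G.Sublist xt := fun G hG =>
    (List.sublist_flatten_of_mem hG).trans hGsubxt
  have h2pow : 2 * 2 ^ (x₀ - 1) = 2 ^ x₀ := by
    have he : x₀ - 1 + 1 = x₀ := by omega
    conv_rhs => rw [← he, pow_succ]
    ring
  obtain ⟨Fs, hfa, hFprops, hFpw⟩ := KSG.refineAll n P (x₀ - 1) Gs
    (by rw [hGlen, hBlen]; omega)
    (by
      intro G hG
      have hGx := hGmem G hG
      obtain ⟨hGL, hGne⟩ := hGprops G hG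
      refine ⟨hGL, KSG.Sp.sublist hGx hSpxt, fun y hy => h4xt y (hGx.subset hy), ?_⟩
      have hhd : G.headD 0 ∈ G := KSG.headD_mem hGne 0
      have h1 : 4 ^ x₀ < G.headD 0 := hcross0 _ (hGx.subset hhd)
      have h2 : (2:ℕ) ^ x₀ ≤ 4 ^ x₀ := Nat.pow_le_pow_left (by norm_num) x₀
      rw [h2pow]
      omega)
    hGpw
  have hFlen : Fs.length = d := by rw [hfa.length_eq, hGlen, hBlen]
  have hFsubxt : Fs.flatten.Sublist xt := (KSG.flatten_sublist_of_forall₂ hfa).trans hGsubxt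
  have hFsubxs : Fs.flatten.Sublist (x₀ :: xt) := hFsubxt.trans (List.sublist_cons_self ..)
  have hFsorted : Fs.flatten.Pairwise (· < ·) := List.Pairwise.sublist hFsubxs hSpxs.sorted_lt
  have hcrossF := KSG.flatten_sorted_cross Fs hFsorted
  have hFmemxt : ∀ Fl ∈ Fs, Fl.Sublist xt := fun Fl hFl =>
    (List.sublist_flatten_of_mem hFl).trans hFsubxt
  refine ⟨Fs.map List.toFinset, ?_, ?_, ?_, ?_⟩
  · intro Fst hFst
    obtain ⟨Fl, hFl, rfl⟩ := List.mem_map.mp hFst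
    obtain ⟨hFlL, hFlne⟩ := hFprops Fl hFl
    refine ⟨?_, ?_, ?_⟩
    · intro a ha
      have h1 : a ∈ Fl := List.mem_toFinset.mp ha
      exact hmemX a (List.mem_cons_of_mem _ ((hFmemxt Fl hFl).subset h1))
    · obtain ⟨a, t, rfl⟩ : ∃ a t, Fl = a :: t := by
        cases Fl with
        | nil => exact absurd rfl hFlne
        | cons a t => exact ⟨a, t, rfl⟩
      exact ⟨a, List.mem_toFinset.mpr (List.mem_cons_self ..)⟩
    · rw [KSG.isLarge_iff]
      have hsorted : Fl.Pairwise (· < ·) :=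
        List.Pairwise.sublist ((hFmemxt Fl hFl).trans (List.sublist_cons_self ..))
          hSpxs.sorted_lt
      rw [KSG.toFinset_sort_eq hsorted]
      simpa using hFlL
  · intro i j hij hj x hx y hy
    rw [List.length_map] at hj
    have hi : i < Fs.length := lt_trans hij hj
    rw [KSG.getD_map_toFinset, List.getD_eq_getElem _ _ hi] at hx
    rw [KSG.getD_map_toFinset, List.getD_eq_getElem _ _ hj] at hy
    exact (List.pairwise_iff_getElem.mp hcrossF i j hi hj hij) x
      (List.mem_toFinset.mp hx) y (List.mem_toFinset.mp hy)
  · rw [KSG.isLarge_iff, List.reverse_replicate]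
    refine KSG.L_replicate_zero_iff.mpr ?_
    rw [Finset.length_sort]
    have hmlpair : ((Fs.map List.toFinset).map (fun F => F.sup id)).Pairwise (· < ·) := by
      rw [List.map_map, List.pairwise_map]
      refine List.Pairwise.imp_of_mem ?_ hcrossF
      intro A B hA hB hcr
      have hAne : A ≠ [] := (hFprops A hA).2
      have hBne : B ≠ [] := (hFprops B hB).2
      have hAne' : A.toFinset.Nonempty := by
        cases A with
        | nil => exact absurd rfl hAne
        | cons a t => exact ⟨a, List.mem_toFinset.mpr (List.mem_cons_self ..)⟩
      have hBne' : B.toFinset.Nonempty := by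
        cases B with
        | nil => exact absurd rfl hBne
        | cons a t => exact ⟨a, List.mem_toFinset.mpr (List.mem_cons_self ..)⟩
      obtain ⟨u, hu, huq⟩ := Finset.exists_mem_eq_sup A.toFinset hAne' id
      obtain ⟨v, hv, hvq⟩ := Finset.exists_mem_eq_sup B.toFinset hBne' id
      show (A.toFinset).sup id < (B.toFinset).sup id
      rw [huq, hvq]
      exact hcr u (List.mem_toFinset.mp hu) v (List.mem_toFinset.mp hv)
    have hnd : ((Fs.map List.toFinset).map (fun F => F.sup id)).Nodup :=
      hmlpair.imp (fun h => Nat.ne_of_lt h)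
    rw [List.toFinset_card_of_nodup hnd]
    simp [hFlen]
  · intro i j hij hj x hx x' hx' y hy y' hy'
    rw [List.length_map] at hj
    have hi : i < Fs.length := lt_trans hij hj
    rw [KSG.getD_map_toFinset, List.getD_eq_getElem _ _ hi] at hx hx'
    rw [KSG.getD_map_toFinset, List.getD_eq_getElem _ _ hj] at hy hy'
    exact (List.pairwise_iff_getElem.mp hFpw i j hi hj hij) x
      (List.mem_toFinset.mp hx) x' (List.mem_toFinset.mp hx') y
      (List.mem_toFinset.mp hy) y' (List.mem_toFinset.mp hy')
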